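/- Let k ≥ 2, σ_i = i(k−i)/2, and C₀ > 0. Let ξ be a maximal solution of system (P) with initial data at τ = 0 satisfying ∑_{i=1}^k ξ_i(0) = 0 and |ξ_i(0)| ≤ C₀ for all i = 1,…,k. Then ξ is defined on all of [0,∞), and there exists a constant C₁ > 0, depending only on k and C₀ (not on the particular solution), such that for all τ ≥ 0, max_{1≤i≤k} |ξ_i(τ)| ≤ C₁·e^{−τ}. -/

import Mathlib

/-- `σᵢ = i(k-i)/2` (so that `σ₀ = σ_k = 0`). -/
noncomputable def sig (k i : ℕ) : ℝ := (i : ℝ) * ((k : ℝ) - (i : ℝ)) / 2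

/-- System (P): for `i = 1,…,k`,
`ξᵢ' = σᵢ₋₁(e^{-(ξᵢ-ξᵢ₋₁)} - 1) - σᵢ(e^{-(ξᵢ₊₁-ξᵢ)} - 1)` on the set `S`
(the conventions for `i = 1` and `i = k` are automatic since `σ₀ = σ_k = 0`). -/
def SolvesP (k : ℕ) (ξ : ℕ → ℝ → ℝ) (S : Set ℝ) : Prop :=
  ∀ i, 1 ≤ i → i ≤ k → ∀ τ ∈ S, HasDerivAt (ξ i)
    (sig k (i - 1) * (Real.exp (-(ξ i τ - ξ (i - 1) τ)) - 1)
      - sig k i * (Real.exp (-(ξ (i + 1) τ - ξ i τ)) - 1)) τ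

namespace Stmt9

open Real Set Finset

/-! ### sig lemmas -/

lemma sig_nonneg {k i : ℕ} (h : i ≤ k) : 0 ≤ sig k i := by
  unfold sig
  have : (i:ℝ) ≤ k := by exact_mod_cast h
  have : 0 ≤ (i:ℝ) := by positivity
  nlinarith [Nat.cast_nonneg (α := ℝ) i, Nat.cast_nonneg (α := ℝ) k]

lemma sig_zero (k : ℕ) : sig k 0 = 0 := by simp [sig]

lemma sig_self (k : ℕ) : sig k k = 0 := by simp [sig]

lemma sig_ge_half {k i : ℕ} (h1 : 1 ≤ i) (h2 : i + 1 ≤ k) : (1:ℝ)/2 ≤ sig k i := by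
  unfold sig
  have hi : (1:ℝ) ≤ (i:ℝ) := by exact_mod_cast h1
  have hk : (i:ℝ) + 1 ≤ (k:ℝ) := by exact_mod_cast h2
  nlinarith

lemma sig_le {k i : ℕ} (h : i ≤ k) : sig k i ≤ (k:ℝ)^2 := by
  unfold sig
  have hi : (i:ℝ) ≤ (k:ℝ) := by exact_mod_cast h
  have h0 : 0 ≤ (i:ℝ) := by positivity
  nlinarith

/-- The key arithmetic identity `σ_{j} + σ_{j+2} = 2 σ_{j+1} - 1`. -/
lemma sig_identity {k j : ℕ} :
    sig k j + sig k (j+2) = 2 * sig k (j+1) - 1 := by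
  unfold sig
  push_cast
  ring

/-! ### calculus helpers -/

/-- If `f` has nonpositive derivative on `Ici 0` then it is antitone there. -/
lemma antitone_of_derivs {f g : ℝ → ℝ}
    (hf : ∀ τ ∈ Ici (0:ℝ), HasDerivAt f (g τ) τ)
    (hg : ∀ τ ∈ Ici (0:ℝ), g τ ≤ 0) : AntitoneOn f (Ici 0) := by
  apply antitoneOn_of_deriv_nonpos (convex_Ici 0)
  · exact fun τ hτ => (hf τ hτ).continuousAt.continuousWithinAt
  · intro τ hτ
    rw [interior_Ici] at hτ
    exact (hf τ (mem_Ici.2 (le_of_lt hτ))).differentiableAt.differentiableWithinAt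
  · intro τ hτ
    rw [interior_Ici] at hτ
    rw [(hf τ (mem_Ici.2 (le_of_lt hτ))).deriv]
    exact hg τ (mem_Ici.2 (le_of_lt hτ))

lemma const_of_derivs {f : ℝ → ℝ}
    (hf : ∀ τ ∈ Ici (0:ℝ), HasDerivAt f 0 τ) :
    ∀ τ ∈ Ici (0:ℝ), f τ = f 0 := by
  intro τ hτ
  have h1 : AntitoneOn f (Ici 0) := antitone_of_derivs hf (fun _ _ => le_refl 0)
  have h2 : AntitoneOn (fun x => -f x) (Ici 0) :=
    antitone_of_derivs (fun τ hτ => ((hf τ hτ).neg).congr_deriv (by simp)) (fun _ _ => le_refl 0)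
  have := h1 (self_mem_Ici (a := (0:ℝ))) hτ hτ
  have := h2 (self_mem_Ici (a := (0:ℝ))) hτ hτ
  simp at *
  linarith

/-- If `f 0 = 0` and `f` has nonneg derivative on `[0, B]` then `f B ≥ 0`; generic helper. -/
lemma nonneg_of_derivs {f g : ℝ → ℝ} {B : ℝ} (hB : 0 ≤ B) (h0 : f 0 = 0)
    (hf : ∀ x ∈ Icc (0:ℝ) B, HasDerivAt f (g x) x)
    (hg : ∀ x ∈ Icc (0:ℝ) B, 0 ≤ g x) : 0 ≤ f B := by
  have : MonotoneOn f (Icc 0 B) := by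
    apply monotoneOn_of_deriv_nonneg (convex_Icc 0 B)
    · exact fun τ hτ => (hf τ hτ).continuousAt.continuousWithinAt
    · intro τ hτ
      have hτ' : τ ∈ Icc (0:ℝ) B := interior_subset hτ
      exact (hf τ hτ').differentiableAt.differentiableWithinAt
    · intro τ hτ
      have hτ' : τ ∈ Icc (0:ℝ) B := interior_subset hτ
      rw [(hf τ hτ').deriv]
      exact hg τ hτ'
  have := this (left_mem_Icc.2 hB) (right_mem_Icc.2 hB) hB
  linarith [h0 ▸ this]


/-! ### scalar inequalities about φ(x) = exp(-x) - 1 + x -/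

lemma phi_nonneg (x : ℝ) : 0 ≤ exp (-x) - 1 + x := by
  have := add_one_le_exp (-x); linarith

lemma exp_quarter_sq (t : ℝ) (ht : 0 ≤ t) : 1 + t + t^2/4 ≤ exp t := by
  have h1 : 1 + t/2 ≤ exp (t/2) := by linarith [add_one_le_exp (t/2)]
  have h2 : exp t = exp (t/2) * exp (t/2) := by rw [← Real.exp_add]; ring_nf
  nlinarith [exp_pos (t/2)]

lemma phi_ge_abs (x : ℝ) : |x| - 1 ≤ exp (-x) - 1 + x := by
  rcases le_total 0 x with h | h
  · rw [abs_of_nonneg h]; have := exp_pos (-x); linarith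
  · rw [abs_of_nonpos h]
    have := exp_quarter_sq (-x) (by linarith)
    nlinarith [sq_nonneg (-x/2 - 1)]

lemma one_sub_exp_neg_le (x : ℝ) : 1 - exp (-x) ≤ x := by
  linarith [add_one_le_exp (-x)]

lemma one_sub_exp_neg_ge {x B : ℝ} (h0 : 0 ≤ x) (hB : x ≤ B) :
    exp (-B) * x ≤ 1 - exp (-x) := by
  have h1 : exp (-x) * x ≤ 1 - exp (-x) := by
    have h2 : 1 + x ≤ exp x := by linarith [add_one_le_exp x]
    have h3 : exp (-x) = (exp x)⁻¹ := exp_neg x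
    have h4 : exp (-x) * exp x = 1 := by rw [← Real.exp_add]; simp
    nlinarith [exp_pos x, exp_pos (-x)]
  have : exp (-B) ≤ exp (-x) := exp_le_exp.2 (by linarith)
  nlinarith

/-- `φ(x) ≥ (e^{-B}/4) x²` for `|x| ≤ B`. -/
lemma phi_lower {x B : ℝ} (hB : |x| ≤ B) :
    exp (-B) / 4 * x^2 ≤ exp (-x) - 1 + x := by
  have hB0 : 0 ≤ B := le_trans (abs_nonneg x) hB
  rcases le_total 0 x with h | h
  · -- use monotonicity on [0, x] with bound B
    have hx : x ≤ B := le_trans (le_abs_self x) hB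
    have := nonneg_of_derivs (f := fun y => exp (-y) - 1 + y - exp (-B)/4 * y^2)
      (g := fun y => -exp (-y) + 1 - exp (-B)/4 * (2*y)) h (by simp)
      (fun y hy => by
        have h1 : HasDerivAt (fun y : ℝ => exp (-y)) (-exp (-y)) y := by
          simpa using ((hasDerivAt_id y).neg.exp)
        have : HasDerivAt (fun y : ℝ => exp (-y) - 1 + y - exp (-B)/4 * y^2)
            (-exp (-y) - 0 + 1 - exp (-B)/4 * (2*y)) y := by
          exact (((h1.sub_const 1).add (hasDerivAt_id y)).sub
            (((hasDerivAt_pow 2 y)).const_mul (exp (-B)/4))).congr_deriv (by ring)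
        exact this.congr_deriv (by ring))
      (fun y hy => by
        have := one_sub_exp_neg_ge hy.1 (le_trans hy.2 hx)
        have : exp (-B) ≤ exp (-B) := le_refl _
        nlinarith [one_sub_exp_neg_ge hy.1 (le_trans hy.2 hx), exp_pos (-B), hy.1])
    linarith
  · -- x ≤ 0 : φ(x) = e^t - 1 - t ≥ t²/4 ≥ e^{-B} t²/4
    have ht : 0 ≤ -x := by linarith
    have := exp_quarter_sq (-x) ht
    have hE : exp (-B) ≤ 1 := exp_le_one_iff.2 (by linarith)
    nlinarith [sq_nonneg x]

/-- `φ(x) ≤ x²/2` for `x ≥ 0`. -/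
lemma phi_le_half_sq {x : ℝ} (h : 0 ≤ x) : exp (-x) - 1 + x ≤ x^2/2 := by
  have := nonneg_of_derivs (f := fun y => y^2/2 - (exp (-y) - 1 + y))
    (g := fun y => y - (-exp (-y) + 1)) h (by simp)
    (fun y hy => by
      have h1 : HasDerivAt (fun y : ℝ => exp (-y)) (-exp (-y)) y := by
        simpa using ((hasDerivAt_id y).neg.exp)
      have : HasDerivAt (fun y : ℝ => y^2/2 - (exp (-y) - 1 + y))
          (2*y/2 - (-exp (-y) - 0 + 1)) y := by
        exact (((hasDerivAt_pow 2 y).div_const 2).sub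
          (((h1.sub_const 1).add (hasDerivAt_id y)))).congr_deriv (by ring)
      exact this.congr_deriv (by ring))
    (fun y hy => by have := one_sub_exp_neg_le y; linarith)
  linarith

/-- `φ(x) ≤ (e^{-x}-1)²/2` for `x ≤ 0`. -/
lemma phi_le_sq_u {x : ℝ} (h : x ≤ 0) : exp (-x) - 1 + x ≤ (exp (-x) - 1)^2/2 := by
  have := nonneg_of_derivs (f := fun t => (exp t - 1)^2/2 - (exp t - 1 - t))
    (g := fun t => (exp t - 1)^2) (B := -x) (by linarith) (by simp)
    (fun t ht => by
      have h1 : HasDerivAt (fun t : ℝ => exp t) (exp t) t := Real.hasDerivAt_exp t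
      have h2 : HasDerivAt (fun t : ℝ => (exp t - 1)^2/2)
          ((2 * (exp t - 1)^1 * exp t)/2) t :=
        (((h1.sub_const 1).pow 2).div_const 2)
      exact (h2.sub ((h1.sub_const 1).sub (hasDerivAt_id t))).congr_deriv (by ring))
    (fun t ht => sq_nonneg _)
  have hh : exp (-x) - 1 + x = exp (-x) - 1 - (-x) := by ring
  rw [hh]
  linarith

/-- combined: `|x| ≤ B → φ(x) ≤ (e^{2B}/2)(e^{-x}-1)²`. -/
lemma phi_upper {x B : ℝ} (hB : |x| ≤ B) :
    exp (-x) - 1 + x ≤ exp (2*B)/2 * (exp (-x) - 1)^2 := by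
  have hB0 : 0 ≤ B := le_trans (abs_nonneg x) hB
  have hE1 : 1 ≤ exp (2*B) := one_le_exp (by linarith)
  rcases le_total x 0 with h | h
  · have := phi_le_sq_u h
    nlinarith [sq_nonneg (exp (-x) - 1)]
  · have h1 := phi_le_half_sq h
    have hx : x ≤ B := le_trans (le_abs_self x) hB
    have h2 := one_sub_exp_neg_ge h hx
    -- (e^{-x}-1)² = (1-e^{-x})² ≥ e^{-2B} x²
    have h3 : (exp (-B) * x)^2 ≤ (exp (-x) - 1)^2 := by
      have h4 : 0 ≤ exp (-B) * x := by positivity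
      have : (exp (-B) * x)^2 ≤ (1 - exp (-x))^2 := by nlinarith
      calc (exp (-B) * x)^2 ≤ (1 - exp (-x))^2 := this
        _ = (exp (-x) - 1)^2 := by ring
    have h5 : exp (2*B) * exp (-B) * exp (-B) = 1 := by
      rw [← Real.exp_add, ← Real.exp_add, show 2*B + -B + -B = 0 by ring, Real.exp_zero]
    nlinarith [exp_pos (2*B), exp_pos (-B), sq_nonneg x]

lemma one_sub_two_mul_exp {B : ℝ} (hB : 0 ≤ B) : (1 - 2*B) * exp (2*B) ≤ 1 := by
  have h1 : 1 - 2*B ≤ exp (-(2*B)) := by linarith [add_one_le_exp (-(2*B))]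
  have h2 : exp (-(2*B)) * exp (2*B) = 1 := by rw [← Real.exp_add]; simp
  nlinarith [exp_pos (2*B)]

lemma phi_bound_const {x B : ℝ} (hB : |x| ≤ B) : exp (-x) - 1 + x ≤ exp B + B := by
  have h1 : exp (-x) ≤ exp B := exp_le_exp.2 (by cases abs_le.1 hB; linarith)
  have h2 : x ≤ B := le_trans (le_abs_self x) hB
  linarith


/-- Abel summation for sequences vanishing at the ends. -/
lemma abel_sum {m : ℕ} (a b : ℕ → ℝ) (ha0 : a 0 = 0) (hak : a (m+2) = 0) :
    ∑ j ∈ range (m+2), (a j - a (j+1)) * b (j+1)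
      = ∑ j ∈ range (m+1), a (j+1) * (b (j+2) - b (j+1)) := by
  have h1 : ∑ j ∈ range (m+2), (a j - a (j+1)) * b (j+1)
      = ∑ j ∈ range (m+2), a j * b (j+1) - ∑ j ∈ range (m+2), a (j+1) * b (j+1) := by
    rw [← Finset.sum_sub_distrib]; apply Finset.sum_congr rfl; intros; ring
  have h2 : ∑ j ∈ range (m+2), a j * b (j+1)
      = ∑ j ∈ range (m+1), a (j+1) * b (j+2) := by
    rw [Finset.sum_range_succ' (fun j => a j * b (j+1)) (m+1)]
    simp [ha0]
  have h3 : ∑ j ∈ range (m+2), a (j+1) * b (j+1)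
      = ∑ j ∈ range (m+1), a (j+1) * b (j+1) := by
    rw [Finset.sum_range_succ]
    simp [hak]
  have h4 : ∑ j ∈ range (m+1), a (j+1) * (b (j+2) - b (j+1))
      = ∑ j ∈ range (m+1), a (j+1) * b (j+2) - ∑ j ∈ range (m+1), a (j+1) * b (j+1) := by
    rw [← Finset.sum_sub_distrib]; apply Finset.sum_congr rfl; intros; ring
  rw [h1, h2, h3, h4]

lemma telescope_zero {m : ℕ} (a : ℕ → ℝ) (ha0 : a 0 = 0) (hak : a (m+2) = 0) :
    ∑ j ∈ range (m+2), (a j - a (j+1)) = 0 := by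
  have := Finset.sum_range_sub' a (m+2)
  rw [this, ha0, hak, sub_zero]

/-- The key (spectral gap ≥ 1) inequality. -/
lemma key_ineq {k m : ℕ} (hk : k = m + 2) (u : ℕ → ℝ) :
    ∑ j ∈ range (m+1), sig k (j+1) * (u (j+1))^2
      ≤ ∑ j ∈ range (m+1), (sig k (j+1) * u (j+1)) *
          (2*(sig k (j+1) * u (j+1)) - sig k j * u j - sig k (j+2) * u (j+2)) := by
  set a : ℕ → ℝ := fun j => sig k j * u j with ha
  have ha0 : a 0 = 0 := by simp [ha, sig_zero]
  have hak : a (m+2) = 0 := by simp [ha, ← hk, sig_self]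
  have hsplit : ∑ j ∈ range (m+1), a (j+1) * (2*(a (j+1)) - a j - a (j+2))
      = 2*∑ j ∈ range (m+1), (a (j+1))^2 - (∑ j ∈ range (m+1), a (j+1) * a j
        + ∑ j ∈ range (m+1), a (j+1) * a (j+2)) := by
    rw [Finset.mul_sum, ← Finset.sum_add_distrib, ← Finset.sum_sub_distrib]
    apply Finset.sum_congr rfl; intros; ring
  have hS1 : ∑ j ∈ range (m+1), a (j+1) * a j = ∑ j ∈ range m, a (j+2) * a (j+1) := by
    rw [Finset.sum_range_succ' (fun j => a (j+1) * a j) m]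
    simp [ha0]
  have hS2 : ∑ j ∈ range (m+1), a (j+1) * a (j+2) = ∑ j ∈ range m, a (j+1) * a (j+2) := by
    rw [Finset.sum_range_succ]
    simp [hak]
  -- cross term bound
  have hcross : ∑ j ∈ range m, (a (j+2) * a (j+1) + a (j+1) * a (j+2))
      ≤ ∑ j ∈ range m, sig k (j+1) * sig k (j+2) * ((u (j+1))^2 + (u (j+2))^2) := by
    apply Finset.sum_le_sum
    intro j hj
    have hjm := Finset.mem_range.1 hj
    have hj1 : j + 1 ≤ k := by omega
    have hj2 : j + 2 ≤ k := by omega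
    have h1 := sig_nonneg hj1
    have h2 := sig_nonneg hj2
    simp only [ha]
    nlinarith [sq_nonneg (u (j+1) - u (j+2)), mul_nonneg h1 h2,
      mul_nonneg (mul_nonneg h1 h2) (sq_nonneg (u (j+1) - u (j+2)))]
  have hT1 : ∑ j ∈ range m, sig k (j+1) * sig k (j+2) * (u (j+1))^2
      = ∑ j ∈ range (m+1), sig k (j+1) * sig k (j+2) * (u (j+1))^2 := by
    rw [Finset.sum_range_succ]
    have : sig k (m+2) = 0 := by rw [← hk]; exact sig_self k
    simp [this]
  have hT2 : ∑ j ∈ range m, sig k (j+1) * sig k (j+2) * (u (j+2))^2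
      = ∑ j ∈ range (m+1), sig k j * sig k (j+1) * (u (j+1))^2 := by
    rw [Finset.sum_range_succ' (fun j => sig k j * sig k (j+1) * (u (j+1))^2) m]
    simp [sig_zero]
  have hfinal : ∑ j ∈ range (m+1), (sig k (j+1) * sig k (j+2) * (u (j+1))^2
        + sig k j * sig k (j+1) * (u (j+1))^2)
      = ∑ j ∈ range (m+1), (2 * sig k (j+1) - 1) * sig k (j+1) * (u (j+1))^2 := by
    apply Finset.sum_congr rfl
    intro j hj
    have h := sig_identity (k := k) (j := j)
    linear_combination (sig k (j+1) * (u (j+1))^2) * h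
  have hsq : ∑ j ∈ range (m+1), (a (j+1))^2
      = ∑ j ∈ range (m+1), (sig k (j+1))^2 * (u (j+1))^2 := by
    apply Finset.sum_congr rfl; intros; simp only [ha]; ring
  calc ∑ j ∈ range (m+1), sig k (j+1) * (u (j+1))^2
      = 2*∑ j ∈ range (m+1), (sig k (j+1))^2 * (u (j+1))^2
        - ∑ j ∈ range (m+1), (2 * sig k (j+1) - 1) * sig k (j+1) * (u (j+1))^2 := by
        rw [Finset.mul_sum, ← Finset.sum_sub_distrib]
        apply Finset.sum_congr rfl; intros; ring
    _ ≤ 2*∑ j ∈ range (m+1), (a (j+1))^2 - (∑ j ∈ range (m+1), a (j+1) * a j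
        + ∑ j ∈ range (m+1), a (j+1) * a (j+2)) := by
        rw [hsq, hS1, hS2]
        have : ∑ j ∈ range m, a (j+2) * a (j+1) + ∑ j ∈ range m, a (j+1) * a (j+2)
            = ∑ j ∈ range m, (a (j+2) * a (j+1) + a (j+1) * a (j+2)) := by
          rw [← Finset.sum_add_distrib]
        rw [this]
        have hc2 : ∑ j ∈ range m, (a (j+2) * a (j+1) + a (j+1) * a (j+2))
            ≤ ∑ j ∈ range (m+1), (2 * sig k (j+1) - 1) * sig k (j+1) * (u (j+1))^2 := by
          calc ∑ j ∈ range m, (a (j+2) * a (j+1) + a (j+1) * a (j+2))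
              ≤ ∑ j ∈ range m, sig k (j+1) * sig k (j+2) * ((u (j+1))^2 + (u (j+2))^2) := hcross
            _ = ∑ j ∈ range m, sig k (j+1) * sig k (j+2) * (u (j+1))^2
                + ∑ j ∈ range m, sig k (j+1) * sig k (j+2) * (u (j+2))^2 := by
                rw [← Finset.sum_add_distrib]
                apply Finset.sum_congr rfl; intros; ring
            _ = ∑ j ∈ range (m+1), (sig k (j+1) * sig k (j+2) * (u (j+1))^2
                + sig k j * sig k (j+1) * (u (j+1))^2) := by
                rw [hT1, hT2, ← Finset.sum_add_distrib]
            _ = _ := hfinal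
        linarith
    _ = ∑ j ∈ range (m+1), a (j+1) * (2*(a (j+1)) - a j - a (j+2)) := hsplit.symm
    _ = _ := by apply Finset.sum_congr rfl; intros; simp only [ha]


lemma sum_Icc_one {m : ℕ} (g : ℕ → ℝ) :
    ∑ i ∈ Finset.Icc 1 (m+2), g i = ∑ j ∈ range (m+2), g (j+1) := by
  rw [← Finset.Ico_add_one_right_eq_Icc, Finset.sum_Ico_eq_sum_range]
  apply Finset.sum_congr (by norm_num)
  intro j _
  rw [Nat.add_comm]

/-- generalized system, nonlinearity `N`. -/
def SolvesGen (k : ℕ) (N : ℝ → ℝ) (ξ : ℕ → ℝ → ℝ) : Prop :=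
  ∀ i, 1 ≤ i → i ≤ k → ∀ τ ∈ Set.Ici (0:ℝ), HasDerivAt (ξ i)
    (sig k (i-1) * N (ξ i τ - ξ (i-1) τ) - sig k i * N (ξ (i+1) τ - ξ i τ)) τ

section gen

variable {m : ℕ} {k : ℕ} {N : ℝ → ℝ} {ξ : ℕ → ℝ → ℝ}

/-- rewrite of the system in terms of `A τ j = σ_j N(d_j)`. -/
lemma rhs_eq (hk : k = m+2) (hsol : SolvesGen k N ξ) :
    ∀ i, 1 ≤ i → i ≤ k → ∀ τ ∈ Set.Ici (0:ℝ), HasDerivAt (ξ i)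
      (sig k (i-1) * N (ξ (i-1+1) τ - ξ (i-1) τ) - sig k i * N (ξ (i+1) τ - ξ i τ)) τ := by
  intro i h1 h2 τ hτ
  have e : i - 1 + 1 = i := by omega
  rw [e]
  exact hsol i h1 h2 τ hτ

/-- Conservation of the sum. -/
lemma sum_conserved (hk : k = m+2) (hsol : SolvesGen k N ξ) :
    ∀ τ ∈ Set.Ici (0:ℝ), ∑ i ∈ Icc 1 k, ξ i τ = ∑ i ∈ Icc 1 k, ξ i 0 := by
  apply const_of_derivs
  intro τ hτ
  have hder : HasDerivAt (fun τ => ∑ i ∈ Icc 1 k, ξ i τ)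
      (∑ i ∈ Icc 1 k, (sig k (i-1) * N (ξ (i-1+1) τ - ξ (i-1) τ)
        - sig k i * N (ξ (i+1) τ - ξ i τ))) τ := by
    apply HasDerivAt.fun_sum
    intro i hi
    have hi' := Finset.mem_Icc.1 hi
    exact rhs_eq hk hsol i hi'.1 hi'.2 τ hτ
  convert hder using 1
  have habel := telescope_zero (m := m) (fun j => sig k j * N (ξ (j+1) τ - ξ j τ))
    (by simp [sig_zero]) (by simp [← hk, sig_self])
  rw [← habel, hk, sum_Icc_one]
  apply Finset.sum_congr rfl
  intro j hj
  have e1 : j + 1 - 1 = j := by omega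
  rw [e1]

/-- The sum of squares is non-increasing, provided `N x * x ≤ 0`. -/
lemma sumsq_antitone (hk : k = m+2) (hsol : SolvesGen k N ξ)
    (hsign : ∀ x, N x * x ≤ 0) :
    AntitoneOn (fun τ => ∑ i ∈ Icc 1 k, (ξ i τ)^2) (Ici 0) := by
  apply antitone_of_derivs (g := fun τ => ∑ i ∈ Icc 1 k,
    (2 * ξ i τ * (sig k (i-1) * N (ξ (i-1+1) τ - ξ (i-1) τ)
      - sig k i * N (ξ (i+1) τ - ξ i τ))))
  · intro τ hτ
    apply HasDerivAt.fun_sum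
    intro i hi
    have hi' := Finset.mem_Icc.1 hi
    have h := (rhs_eq hk hsol i hi'.1 hi'.2 τ hτ).pow 2
    refine h.congr_deriv ?_
    ring
  · intro τ hτ
    have habel := abel_sum (m := m) (fun j => sig k j * N (ξ (j+1) τ - ξ j τ))
      (fun i => ξ i τ) (by simp [sig_zero]) (by simp [← hk, sig_self])
    have hIcc : ∑ i ∈ Finset.Icc 1 k, (2 * ξ i τ * (sig k (i-1) * N (ξ (i-1+1) τ - ξ (i-1) τ)
        - sig k i * N (ξ (i+1) τ - ξ i τ)))
        = 2 * ∑ j ∈ range (m+2), (sig k j * N (ξ (j+1) τ - ξ j τ)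
          - sig k (j+1) * N (ξ (j+1+1) τ - ξ (j+1) τ)) * ξ (j+1) τ := by
      rw [hk, sum_Icc_one, Finset.mul_sum]
      apply Finset.sum_congr rfl
      intro j hj
      have e1 : j + 1 - 1 = j := by omega
      rw [e1]
      ring
    rw [hIcc, habel]
    have hsum : ∑ j ∈ range (m+1), sig k (j+1) * N (ξ (j+1+1) τ - ξ (j+1) τ)
        * (ξ (j+2) τ - ξ (j+1) τ) ≤ 0 := by
      apply Finset.sum_nonpos
      intro j hj
      have h1 : 0 ≤ sig k (j+1) := by
        apply sig_nonneg
        have := Finset.mem_range.1 hj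
        omega
      have h2 := hsign (ξ (j+1+1) τ - ξ (j+1) τ)
      have e : j + 2 = j + 1 + 1 := by omega
      rw [e]
      calc sig k (j+1) * N (ξ (j+1+1) τ - ξ (j+1) τ) * (ξ (j+1+1) τ - ξ (j+1) τ)
          = sig k (j+1) * (N (ξ (j+1+1) τ - ξ (j+1) τ) * (ξ (j+1+1) τ - ξ (j+1) τ)) := by ring
        _ ≤ 0 := mul_nonpos_of_nonneg_of_nonpos h1 h2
    linarith

/-- Pointwise square bound from the decreasing sum of squares. -/
lemma sq_bound (hk : k = m+2) (hsol : SolvesGen k N ξ)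
    (hsign : ∀ x, N x * x ≤ 0) {C₀ : ℝ}
    (hinit : ∀ i, 1 ≤ i → i ≤ k → |ξ i 0| ≤ C₀) :
    ∀ τ ∈ Set.Ici (0:ℝ), ∀ i, 1 ≤ i → i ≤ k → (ξ i τ)^2 ≤ (k:ℝ) * C₀^2 := by
  intro τ hτ i h1 h2
  have hmono := sumsq_antitone hk hsol hsign
  have hV : ∑ l ∈ Icc 1 k, (ξ l τ)^2 ≤ ∑ l ∈ Icc 1 k, (ξ l 0)^2 :=
    hmono (self_mem_Ici) hτ hτ
  have hsingle : (ξ i τ)^2 ≤ ∑ l ∈ Icc 1 k, (ξ l τ)^2 := by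
    apply Finset.single_le_sum (fun l _ => sq_nonneg (ξ l τ))
    exact Finset.mem_Icc.2 ⟨h1, h2⟩
  have hinit' : ∑ l ∈ Icc 1 k, (ξ l 0)^2 ≤ (k:ℝ) * C₀^2 := by
    have hcard : (Finset.Icc 1 k).card = k := by rw [Nat.card_Icc]; omega
    calc ∑ l ∈ Finset.Icc 1 k, (ξ l 0)^2 ≤ ∑ l ∈ Finset.Icc 1 k, C₀^2 := by
          apply Finset.sum_le_sum
          intro l hl
          have hl' := Finset.mem_Icc.1 hl
          have := hinit l hl'.1 hl'.2
          nlinarith [abs_nonneg (ξ l 0), sq_abs (ξ l 0)]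
      _ = (k:ℝ) * C₀^2 := by rw [Finset.sum_const, hcard, nsmul_eq_mul]
  linarith

end gen


noncomputable def nl (x : ℝ) : ℝ := Real.exp (-x) - 1

set_option maxHeartbeats 2000000 in
/-- The main decay estimate, for an arbitrary global solution. -/
lemma decay {k m : ℕ} (hk : k = m + 2) (C₀ : ℝ) (hC₀ : 0 < C₀) :
    ∃ C₁ > 0, ∀ ξ : ℕ → ℝ → ℝ,
      (∑ i ∈ Finset.Icc 1 k, ξ i 0 = 0) →
      (∀ i, 1 ≤ i → i ≤ k → |ξ i 0| ≤ C₀) →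
      SolvesGen k nl ξ →
      ∀ τ, 0 ≤ τ → ∀ i, 1 ≤ i → i ≤ k → |ξ i τ| ≤ C₁ * Real.exp (-τ) := by
  have hk2 : (2:ℝ) ≤ (k:ℝ) := by rw [hk]; push_cast; linarith [Nat.cast_nonneg (α := ℝ) m]
  have hkpos : (0:ℝ) < (k:ℝ) := by linarith
  -- constants
  set Φmax : ℝ := (k:ℝ)^3 * (exp (2*C₀) + 2*C₀) with hΦmaxdef
  have hΦmaxpos : 0 < Φmax := by
    apply mul_pos (by positivity)
    have := exp_pos (2*C₀); linarith
  set B₀ : ℝ := 1 + 2*Φmax with hB₀def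
  have hB₀pos : 0 < B₀ := by linarith
  set γ : ℝ := exp (-(2*B₀)) with hγdef
  have hγpos : 0 < γ := by positivity
  set α : ℝ := 2 * γ with hαdef
  have hαpos : 0 < α := by positivity
  have hαγ : α = 2*γ := hαdef
  set c₀ : ℝ := exp (-B₀) / 4 with hc₀def
  have hc₀pos : 0 < c₀ := by positivity
  set B₁ : ℝ := Real.sqrt (2*Φmax/c₀) with hB₁def
  have hB₁pos : 0 < B₁ := Real.sqrt_pos.2 (by positivity)
  set Φ₂ : ℝ := Φmax * exp (4*B₁/γ) with hΦ₂def
  have hΦ₂pos : 0 < Φ₂ := by positivity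
  set D : ℝ := Real.sqrt (2*Φ₂/c₀) with hDdef
  have hDpos : 0 < D := Real.sqrt_pos.2 (by positivity)
  refine ⟨2*(k:ℝ)*D, by positivity, ?_⟩
  intro ξ hsum0 hinit hsol
  -- abbreviations
  set d : ℕ → ℝ → ℝ := fun j τ => ξ (j+1) τ - ξ j τ with hddef
  set u : ℕ → ℝ → ℝ := fun j τ => exp (-(d j τ)) - 1 with hudef
  set A : ℝ → ℕ → ℝ := fun τ j => sig k j * u j τ with hAdef
  set Φ : ℝ → ℝ := fun τ => ∑ j ∈ range (m+1),
    sig k (j+1) * (exp (-(d (j+1) τ)) - 1 + d (j+1) τ) with hΦdef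
  -- derivative of d
  have hd : ∀ j, j ≤ m → ∀ τ ∈ Ici (0:ℝ), HasDerivAt (d (j+1))
      ((A τ (j+1) - A τ (j+2)) - (A τ j - A τ (j+1))) τ := by
    intro j hj τ hτ
    have h2 := rhs_eq hk hsol (j+2) (by omega) (by omega) τ hτ
    have h1 := rhs_eq hk hsol (j+1) (by omega) (by omega) τ hτ
    have e2 : j + 2 - 1 = j + 1 := by omega
    have e1 : j + 1 - 1 = j := by omega
    rw [e2] at h2
    rw [e1] at h1
    have := h2.sub h1
    refine this.congr_deriv ?_
    all_goals simp only [hAdef, hudef, hddef, nl]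
    all_goals try ring
  -- derivative of Φ
  have hΦderiv : ∀ τ ∈ Ici (0:ℝ), HasDerivAt Φ
      (∑ j ∈ range (m+1), (-(A τ (j+1))) * (2*A τ (j+1) - A τ j - A τ (j+2))) τ := by
    intro τ hτ
    apply HasDerivAt.fun_sum
    intro j hj
    have hjm : j ≤ m := by have := Finset.mem_range.1 hj; omega
    have hdj := hd j hjm τ hτ
    have hexp : HasDerivAt (fun τ => exp (-(d (j+1) τ)))
        (exp (-(d (j+1) τ)) * (-((A τ (j+1) - A τ (j+2)) - (A τ j - A τ (j+1))))) τ :=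
      (hdj.neg).exp
    have hfull := ((hexp.sub_const 1).add hdj).const_mul (sig k (j+1))
    refine hfull.congr_deriv ?_
    simp only [hAdef, hudef]
    ring
  -- the key differential inequality Φ' ≤ -Σ σ u²
  have hΦle : ∀ τ, ∑ j ∈ range (m+1), (-(A τ (j+1))) * (2*A τ (j+1) - A τ j - A τ (j+2))
      ≤ -∑ j ∈ range (m+1), sig k (j+1) * (u (j+1) τ)^2 := by
    intro τ
    have hki := key_ineq hk (fun j => u j τ)
    have he : ∑ j ∈ range (m+1), (-(A τ (j+1))) * (2*A τ (j+1) - A τ j - A τ (j+2))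
        = -∑ j ∈ range (m+1), (sig k (j+1) * u (j+1) τ) *
          (2*(sig k (j+1) * u (j+1) τ) - sig k j * u j τ - sig k (j+2) * u (j+2) τ) := by
      rw [← Finset.sum_neg_distrib]
      apply Finset.sum_congr rfl
      intro j hj
      simp only [hAdef]
      ring
    rw [he]
    exact neg_le_neg hki
  have hsigpos : ∀ j ∈ range (m+1), (0:ℝ) ≤ sig k (j+1) := by
    intro j hj
    apply sig_nonneg
    have := Finset.mem_range.1 hj; omega
  have hsighalf : ∀ j ∈ range (m+1), (1:ℝ)/2 ≤ sig k (j+1) := by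
    intro j hj
    apply sig_ge_half (by omega)
    have := Finset.mem_range.1 hj; omega
  have hsumu_nonneg : ∀ τ, 0 ≤ ∑ j ∈ range (m+1), sig k (j+1) * (u (j+1) τ)^2 := by
    intro τ
    apply Finset.sum_nonneg
    intro j hj
    exact mul_nonneg (hsigpos j hj) (sq_nonneg _)
  -- Φ is non-increasing
  have hΦmono : AntitoneOn Φ (Ici 0) := by
    apply antitone_of_derivs hΦderiv
    intro τ hτ
    have := hΦle τ
    have := hsumu_nonneg τ
    linarith
  -- Φ(0) ≤ Φmax
  have hΦ0 : Φ 0 ≤ Φmax := by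
    have hterm : ∀ j ∈ range (m+1),
        sig k (j+1) * (exp (-(d (j+1) 0)) - 1 + d (j+1) 0) ≤ (k:ℝ)^2 * (exp (2*C₀) + 2*C₀) := by
      intro j hj
      have hjm := Finset.mem_range.1 hj
      have hd0 : |d (j+1) 0| ≤ 2*C₀ := by
        simp only [hddef]
        have h1 := hinit (j+1+1) (by omega) (by omega)
        have h2 := hinit (j+1) (by omega) (by omega)
        calc |ξ (j+1+1) 0 - ξ (j+1) 0| ≤ |ξ (j+1+1) 0| + |ξ (j+1) 0| := abs_sub _ _
          _ ≤ 2*C₀ := by linarith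
      have hb := phi_bound_const hd0
      have hσ : sig k (j+1) ≤ (k:ℝ)^2 := sig_le (by omega)
      have hφpos := phi_nonneg (d (j+1) 0)
      have hσpos := hsigpos j hj
      have hBc : 0 < exp (2*C₀) + 2*C₀ := by
        have := exp_pos (2*C₀); linarith
      calc sig k (j+1) * (exp (-(d (j+1) 0)) - 1 + d (j+1) 0)
          ≤ sig k (j+1) * (exp (2*C₀) + 2*C₀) := by
            apply mul_le_mul_of_nonneg_left hb hσpos
        _ ≤ (k:ℝ)^2 * (exp (2*C₀) + 2*C₀) := by
            apply mul_le_mul_of_nonneg_right hσ (le_of_lt hBc)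
    calc Φ 0 ≤ ∑ j ∈ range (m+1), (k:ℝ)^2 * (exp (2*C₀) + 2*C₀) :=
          Finset.sum_le_sum hterm
      _ = (m+1:ℝ) * ((k:ℝ)^2 * (exp (2*C₀) + 2*C₀)) := by
          rw [Finset.sum_const, Finset.card_range, nsmul_eq_mul]; push_cast; ring
      _ ≤ Φmax := by
          rw [hΦmaxdef]
          have hm1k : (m+1:ℝ) ≤ (k:ℝ) := by rw [hk]; push_cast; linarith
          have hBc : 0 < exp (2*C₀) + 2*C₀ := by
            have := exp_pos (2*C₀); linarith
          nlinarith [sq_nonneg (k:ℝ)]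
  have hΦnonneg : ∀ τ, 0 ≤ Φ τ := by
    intro τ
    apply Finset.sum_nonneg
    intro j hj
    exact mul_nonneg (hsigpos j hj) (phi_nonneg _)
  have hΦτ : ∀ τ ∈ Ici (0:ℝ), Φ τ ≤ Φmax := by
    intro τ hτ
    exact le_trans (hΦmono self_mem_Ici hτ hτ) hΦ0
  -- uniform bound on the differences
  have hphi_term : ∀ τ ∈ Ici (0:ℝ), ∀ j ∈ range (m+1),
      sig k (j+1) * (exp (-(d (j+1) τ)) - 1 + d (j+1) τ) ≤ Φ τ := by
    intro τ hτ j hj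
    apply Finset.single_le_sum (f := fun j => sig k (j+1) * (exp (-(d (j+1) τ)) - 1 + d (j+1) τ))
      (fun l hl => mul_nonneg (hsigpos l hl) (phi_nonneg _)) hj
  have hphile : ∀ τ ∈ Ici (0:ℝ), ∀ j ∈ range (m+1),
      exp (-(d (j+1) τ)) - 1 + d (j+1) τ ≤ 2 * Φ τ := by
    intro τ hτ j hj
    have h1 := hphi_term τ hτ j hj
    have h2 := hsighalf j hj
    have h3 := phi_nonneg (d (j+1) τ)
    nlinarith
  have hdB₀ : ∀ τ ∈ Ici (0:ℝ), ∀ j ∈ range (m+1), |d (j+1) τ| ≤ B₀ := by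
    intro τ hτ j hj
    have h1 := hphile τ hτ j hj
    have h2 := phi_ge_abs (d (j+1) τ)
    have h3 := hΦτ τ hτ
    rw [hB₀def]
    linarith
  -- Stage 1 : Φ τ ≤ Φmax exp (-α τ)
  have hstage1 : ∀ τ ∈ Ici (0:ℝ), Φ τ ≤ Φmax * exp (-(α*τ)) := by
    have hGmono : AntitoneOn (fun τ => Φ τ * exp (α*τ)) (Ici 0) := by
      apply antitone_of_derivs (g := fun τ =>
        (∑ j ∈ range (m+1), (-(A τ (j+1))) * (2*A τ (j+1) - A τ j - A τ (j+2))) * exp (α*τ)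
          + Φ τ * (exp (α*τ) * α))
      · intro τ hτ
        have h1 := hΦderiv τ hτ
        have h2 : HasDerivAt (fun τ => exp (α*τ)) (exp (α*τ) * α) τ := by
          have := ((hasDerivAt_id τ).const_mul α).exp
          simpa using this
        exact h1.mul h2
      · intro τ hτ
        have h1 := hΦle τ
        have hαΦ : α * Φ τ ≤ ∑ j ∈ range (m+1), sig k (j+1) * (u (j+1) τ)^2 := by
          rw [hΦdef, Finset.mul_sum]
          apply Finset.sum_le_sum
          intro j hj
          have hup := phi_upper (hdB₀ τ hτ j hj)
          have hσpos := hsigpos j hj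
          have hαe : α * (exp (2*B₀)/2) = 1 := by
            rw [hαdef, hγdef, show 2 * exp (-(2*B₀)) * (exp (2*B₀)/2)
              = exp (-(2*B₀)) * exp (2*B₀) from by ring, ← Real.exp_add]
            simp
          have : α * (exp (-(d (j+1) τ)) - 1 + d (j+1) τ)
              ≤ (exp (-(d (j+1) τ)) - 1)^2 := by
            calc α * (exp (-(d (j+1) τ)) - 1 + d (j+1) τ)
                ≤ α * (exp (2*B₀)/2 * (exp (-(d (j+1) τ)) - 1)^2) := by
                  apply mul_le_mul_of_nonneg_left hup (le_of_lt hαpos)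
              _ = (exp (-(d (j+1) τ)) - 1)^2 := by
                  rw [show α * (exp (2*B₀)/2 * (exp (-(d (j+1) τ)) - 1)^2)
                    = (α * (exp (2*B₀)/2)) * (exp (-(d (j+1) τ)) - 1)^2 by ring, hαe, one_mul]
          calc α * (sig k (j+1) * (exp (-(d (j+1) τ)) - 1 + d (j+1) τ))
              = sig k (j+1) * (α * (exp (-(d (j+1) τ)) - 1 + d (j+1) τ)) := by ring
            _ ≤ sig k (j+1) * (exp (-(d (j+1) τ)) - 1)^2 := by
                apply mul_le_mul_of_nonneg_left this hσpos
            _ = sig k (j+1) * (u (j+1) τ)^2 := by rw [hudef]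
        have hexp_pos := exp_pos (α*τ)
        have hS := hsumu_nonneg τ
        nlinarith
    intro τ hτ
    have h1 : Φ τ * exp (α*τ) ≤ Φ 0 * exp (α*0) := hGmono self_mem_Ici hτ hτ
    rw [mul_zero, Real.exp_zero, mul_one] at h1
    have h2 : Φ τ * exp (α*τ) ≤ Φmax := le_trans h1 hΦ0
    have h3 : exp (-(α*τ)) * exp (α*τ) = 1 := by rw [← Real.exp_add]; simp
    have h4 := exp_pos (α*τ)
    have h5 := exp_pos (-(α*τ))
    calc Φ τ = (Φ τ * exp (α*τ)) * exp (-(α*τ)) := by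
          rw [mul_assoc, mul_comm (exp (α*τ)), h3, mul_one]
      _ ≤ Φmax * exp (-(α*τ)) := by apply mul_le_mul_of_nonneg_right h2 (le_of_lt h5)
  -- Stage 1b : |d| ≤ B₁ exp (-γτ)
  have hd_decay1 : ∀ τ ∈ Ici (0:ℝ), ∀ j ∈ range (m+1),
      |d (j+1) τ| ≤ B₁ * exp (-(γ*τ)) := by
    intro τ hτ j hj
    have h1 := hphile τ hτ j hj
    have h2 := phi_lower (hdB₀ τ hτ j hj)
    have h3 := hstage1 τ hτ
    have hsq : (d (j+1) τ)^2 ≤ (2*Φmax/c₀) * exp (-(α*τ)) := by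
      have hc4 : c₀ = exp (-B₀)/4 := hc₀def
      rw [div_mul_eq_mul_div, le_div_iff₀ hc₀pos]
      calc (d (j+1) τ)^2 * c₀ = c₀ * (d (j+1) τ)^2 := by ring
        _ = exp (-B₀)/4 * (d (j+1) τ)^2 := by rw [hc4]
        _ ≤ exp (-(d (j+1) τ)) - 1 + d (j+1) τ := h2
        _ ≤ 2 * Φ τ := h1
        _ ≤ 2 * (Φmax * exp (-(α*τ))) := by linarith
        _ = 2*Φmax * exp (-(α*τ)) := by ring
    have habs : |d (j+1) τ| = Real.sqrt ((d (j+1) τ)^2) := (Real.sqrt_sq_eq_abs _).symm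
    rw [habs]
    calc Real.sqrt ((d (j+1) τ)^2) ≤ Real.sqrt ((2*Φmax/c₀) * exp (-(α*τ))) :=
          Real.sqrt_le_sqrt hsq
      _ = B₁ * exp (-(γ*τ)) := by
          rw [Real.sqrt_mul (by positivity), ← hB₁def, ← Real.exp_half]
          congr 1
          rw [hαγ]
          ring
  -- Stage 2 : Φ τ ≤ Φ₂ exp (-2τ)
  have hstage2 : ∀ τ ∈ Ici (0:ℝ), Φ τ ≤ Φ₂ * exp (-(2*τ)) := by
    have hW : ∀ τ : ℝ, HasDerivAt (fun τ => 2*τ + (4*B₁/γ) * exp (-(γ*τ)))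
        (2 - 4*(B₁*exp (-(γ*τ)))) τ := by
      intro τ
      have h1 : HasDerivAt (fun τ : ℝ => 2*τ) 2 τ := by
        simpa using (hasDerivAt_id τ).const_mul (2:ℝ)
      have h2 : HasDerivAt (fun τ : ℝ => exp (-(γ*τ))) (exp (-(γ*τ)) * (-γ)) τ := by
        have := (((hasDerivAt_id τ).const_mul γ).neg).exp
        simpa using this
      have := h1.add (h2.const_mul (4*B₁/γ))
      refine this.congr_deriv ?_
      field_simp
      ring
    have hGmono : AntitoneOn (fun τ => Φ τ * exp (2*τ + (4*B₁/γ) * exp (-(γ*τ)))) (Ici 0) := by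
      apply antitone_of_derivs (g := fun τ =>
        (∑ j ∈ range (m+1), (-(A τ (j+1))) * (2*A τ (j+1) - A τ j - A τ (j+2)))
          * exp (2*τ + (4*B₁/γ) * exp (-(γ*τ)))
          + Φ τ * (exp (2*τ + (4*B₁/γ) * exp (-(γ*τ))) * (2 - 4*(B₁*exp (-(γ*τ)))))) 
      · intro τ hτ
        exact (hΦderiv τ hτ).mul ((hW τ).exp)
      · intro τ hτ
        set Bt : ℝ := B₁ * exp (-(γ*τ)) with hBtdef
        have hBtpos : 0 < Bt := by positivity
        have h1 := hΦle τ
        have hmain : (2 - 4*Bt) * Φ τ ≤ ∑ j ∈ range (m+1), sig k (j+1) * (u (j+1) τ)^2 := by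
          rcases le_or_gt (2 - 4*Bt) 0 with hc | hc
          · have := hsumu_nonneg τ
            have := hΦnonneg τ
            nlinarith
          · -- per-term: (2-4Bt) φ(d) ≤ u²
            have hperterm : ∀ j ∈ range (m+1), (2 - 4*Bt) *
                (sig k (j+1) * (exp (-(d (j+1) τ)) - 1 + d (j+1) τ))
                ≤ sig k (j+1) * (u (j+1) τ)^2 := by
              intro j hj
              have hdb := hd_decay1 τ hτ j hj
              have hup := phi_upper (B := Bt) (by rw [hBtdef]; exact hdb)
              have hσpos := hsigpos j hj
              have h12 := one_sub_two_mul_exp (B := Bt) (le_of_lt hBtpos)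
              have hE := exp_pos (2*Bt)
              have husq := sq_nonneg (exp (-(d (j+1) τ)) - 1)
              have : (2 - 4*Bt) * (exp (-(d (j+1) τ)) - 1 + d (j+1) τ)
                  ≤ (u (j+1) τ)^2 := by
                rw [hudef]
                calc (2 - 4*Bt) * (exp (-(d (j+1) τ)) - 1 + d (j+1) τ)
                    ≤ (2 - 4*Bt) * (exp (2*Bt)/2 * (exp (-(d (j+1) τ)) - 1)^2) := by
                      apply mul_le_mul_of_nonneg_left hup (le_of_lt hc)
                  _ = ((1 - 2*Bt) * exp (2*Bt)) * (exp (-(d (j+1) τ)) - 1)^2 := by ring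
                  _ ≤ 1 * (exp (-(d (j+1) τ)) - 1)^2 := by
                      apply mul_le_mul_of_nonneg_right h12 husq
                  _ = (exp (-(d (j+1) τ)) - 1)^2 := by ring
              calc (2 - 4*Bt) * (sig k (j+1) * (exp (-(d (j+1) τ)) - 1 + d (j+1) τ))
                  = sig k (j+1) * ((2 - 4*Bt) * (exp (-(d (j+1) τ)) - 1 + d (j+1) τ)) := by ring
                _ ≤ sig k (j+1) * (u (j+1) τ)^2 := mul_le_mul_of_nonneg_left this hσpos
            calc (2 - 4*Bt) * Φ τ
                = ∑ j ∈ range (m+1), (2 - 4*Bt) *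
                  (sig k (j+1) * (exp (-(d (j+1) τ)) - 1 + d (j+1) τ)) := by
                  rw [hΦdef, Finset.mul_sum]
              _ ≤ ∑ j ∈ range (m+1), sig k (j+1) * (u (j+1) τ)^2 :=
                  Finset.sum_le_sum hperterm
        have hexp_pos := exp_pos (2*τ + (4*B₁/γ) * exp (-(γ*τ)))
        have hfact : (∑ j ∈ range (m+1), (-(A τ (j+1))) * (2*A τ (j+1) - A τ j - A τ (j+2)))
            + (2 - 4*Bt) * Φ τ ≤ 0 := by
          have hS := hsumu_nonneg τ
          linarith
        have hstep : (∑ j ∈ range (m+1), (-(A τ (j+1))) * (2*A τ (j+1) - A τ j - A τ (j+2)))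
              * exp (2*τ + (4*B₁/γ) * exp (-(γ*τ)))
            + Φ τ * (exp (2*τ + (4*B₁/γ) * exp (-(γ*τ))) * (2 - 4*Bt))
            = ((∑ j ∈ range (m+1), (-(A τ (j+1))) * (2*A τ (j+1) - A τ j - A τ (j+2)))
              + (2 - 4*Bt) * Φ τ) * exp (2*τ + (4*B₁/γ) * exp (-(γ*τ))) := by ring
        rw [hstep]
        exact mul_nonpos_iff.2 (Or.inr ⟨hfact, le_of_lt hexp_pos⟩)
    intro τ hτ
    have h1 := hGmono self_mem_Ici hτ hτ
    beta_reduce at h1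
    have hW0 : (2:ℝ)*0 + (4*B₁/γ) * exp (-(γ*0)) = 4*B₁/γ := by
      norm_num
    rw [hW0] at h1
    have h2 : Φ τ * exp (2*τ + (4*B₁/γ) * exp (-(γ*τ))) ≤ Φmax * exp (4*B₁/γ) := by
      calc Φ τ * exp (2*τ + (4*B₁/γ) * exp (-(γ*τ))) ≤ Φ 0 * exp (4*B₁/γ) := h1
        _ ≤ Φmax * exp (4*B₁/γ) := by
            apply mul_le_mul_of_nonneg_right hΦ0 (le_of_lt (exp_pos _))
    have h3 : exp (2*τ) ≤ exp (2*τ + (4*B₁/γ) * exp (-(γ*τ))) := by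
      apply exp_le_exp.2
      have : 0 ≤ (4*B₁/γ) * exp (-(γ*τ)) := by positivity
      linarith
    have h4 : Φ τ * exp (2*τ) ≤ Φ₂ := by
      rw [hΦ₂def]
      calc Φ τ * exp (2*τ) ≤ Φ τ * exp (2*τ + (4*B₁/γ) * exp (-(γ*τ))) := by
            apply mul_le_mul_of_nonneg_left h3 (hΦnonneg τ)
        _ ≤ Φmax * exp (4*B₁/γ) := h2
    have h5 : exp (-(2*τ)) * exp (2*τ) = 1 := by rw [← Real.exp_add]; simp
    have h6 := exp_pos (-(2*τ))
    calc Φ τ = (Φ τ * exp (2*τ)) * exp (-(2*τ)) := by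
          rw [mul_assoc, mul_comm (exp (2*τ)), h5, mul_one]
      _ ≤ Φ₂ * exp (-(2*τ)) := by apply mul_le_mul_of_nonneg_right h4 (le_of_lt h6)
  -- Stage 3 : |d| ≤ D exp (-τ)
  have hd_decay : ∀ τ ∈ Ici (0:ℝ), ∀ j ∈ range (m+1),
      |d (j+1) τ| ≤ D * exp (-τ) := by
    intro τ hτ j hj
    have h1 := hphile τ hτ j hj
    have h2 := phi_lower (hdB₀ τ hτ j hj)
    have h3 := hstage2 τ hτ
    have hsq : (d (j+1) τ)^2 ≤ (2*Φ₂/c₀) * exp (-(2*τ)) := by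
      rw [div_mul_eq_mul_div, le_div_iff₀ hc₀pos]
      calc (d (j+1) τ)^2 * c₀ = exp (-B₀)/4 * (d (j+1) τ)^2 := by rw [hc₀def]; ring
        _ ≤ exp (-(d (j+1) τ)) - 1 + d (j+1) τ := h2
        _ ≤ 2 * Φ τ := h1
        _ ≤ 2*Φ₂ * exp (-(2*τ)) := by linarith
    have habs : |d (j+1) τ| = Real.sqrt ((d (j+1) τ)^2) := (Real.sqrt_sq_eq_abs _).symm
    rw [habs]
    calc Real.sqrt ((d (j+1) τ)^2) ≤ Real.sqrt ((2*Φ₂/c₀) * exp (-(2*τ))) :=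
          Real.sqrt_le_sqrt hsq
      _ = D * exp (-τ) := by
          rw [Real.sqrt_mul (by positivity), ← hDdef, ← Real.exp_half]
          congr 1
          ring
  -- Conservation
  have hcons : ∀ τ ∈ Ici (0:ℝ), ∑ i ∈ Finset.Icc 1 k, ξ i τ = 0 := by
    intro τ hτ
    rw [sum_conserved hk hsol τ hτ, hsum0]
  -- telescoping bound
  intro τ hτ i h1 h2
  have hτ' : τ ∈ Ici (0:ℝ) := hτ
  set T : ℝ := ∑ j ∈ range (m+1), |d (j+1) τ| with hTdef
  have hTle : T ≤ (k:ℝ) * (D * exp (-τ)) := by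
    calc T ≤ ∑ j ∈ range (m+1), D * exp (-τ) :=
          Finset.sum_le_sum (fun j hj => hd_decay τ hτ' j hj)
      _ = (m+1:ℝ) * (D * exp (-τ)) := by
          rw [Finset.sum_const, Finset.card_range, nsmul_eq_mul]; push_cast; ring
      _ ≤ (k:ℝ) * (D * exp (-τ)) := by
          have hm1k : (m+1:ℝ) ≤ (k:ℝ) := by rw [hk]; push_cast; linarith
          have : 0 ≤ D * exp (-τ) := by positivity
          nlinarith
  -- |ξ n τ - ξ 1 τ| ≤ partial sums of |d|
  have haux : ∀ n, 1 ≤ n → n ≤ k → |ξ n τ - ξ 1 τ| ≤ T := by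
    have key : ∀ n, 1 ≤ n → n ≤ k → |ξ n τ - ξ 1 τ| ≤ ∑ j ∈ range (n-1), |d (j+1) τ| := by
      intro n
      induction n with
      | zero => omega
      | succ p ih =>
        intro h1p h2p
        rcases Nat.eq_or_lt_of_le h1p with he | hlt
        · simp [← he]
        · have hp1 : 1 ≤ p := by omega
          have hp2 : p ≤ k := by omega
          have hih := ih hp1 hp2
          have he : p + 1 - 1 = p := by omega
          rw [he]
          have he2 : p = (p - 1) + 1 := by omega
          rw [show range p = range ((p-1)+1) by rw [← he2], Finset.sum_range_succ]
          have htri : |ξ (p+1) τ - ξ 1 τ| ≤ |ξ (p+1) τ - ξ p τ| + |ξ p τ - ξ 1 τ| := by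
            calc |ξ (p+1) τ - ξ 1 τ| = |(ξ (p+1) τ - ξ p τ) + (ξ p τ - ξ 1 τ)| := by ring_nf
              _ ≤ |ξ (p+1) τ - ξ p τ| + |ξ p τ - ξ 1 τ| := abs_add_le _ _
          have e3 : p - 1 + 1 = p := by omega
          have hdp : |d ((p-1)+1) τ| = |ξ (p+1) τ - ξ p τ| := by
            simp only [hddef, e3]
          have hple : p - 1 ≤ p - 1 := le_refl _
          have hmono : ∑ j ∈ range (p-1), |d (j+1) τ| ≤ ∑ j ∈ range (p-1), |d (j+1) τ| := le_refl _
          rw [hdp]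
          linarith
    intro n h1n h2n
    calc |ξ n τ - ξ 1 τ| ≤ ∑ j ∈ range (n-1), |d (j+1) τ| := key n h1n h2n
      _ ≤ T := by
        rw [hTdef]
        apply Finset.sum_le_sum_of_subset_of_nonneg
        · apply Finset.range_subset_range.2
          omega
        · intro j _ _
          exact abs_nonneg _
  -- final bound via conservation
  have hfin : (k:ℝ) * |ξ i τ| ≤ (k:ℝ) * (2*T) := by
    have hsum : (k:ℝ) * ξ i τ = ∑ l ∈ Finset.Icc 1 k, (ξ i τ - ξ l τ) := by
      rw [Finset.sum_sub_distrib, hcons τ hτ', Finset.sum_const, Nat.card_Icc]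
      rw [show k + 1 - 1 = k by omega, nsmul_eq_mul]
      ring
    have habs : (k:ℝ) * |ξ i τ| = |(k:ℝ) * ξ i τ| := by
      rw [abs_mul, abs_of_pos hkpos]
    rw [habs, hsum]
    calc |∑ l ∈ Finset.Icc 1 k, (ξ i τ - ξ l τ)| ≤ ∑ l ∈ Finset.Icc 1 k, |ξ i τ - ξ l τ| :=
          Finset.abs_sum_le_sum_abs _ _
      _ ≤ ∑ l ∈ Finset.Icc 1 k, 2*T := by
          apply Finset.sum_le_sum
          intro l hl
          have hl' := Finset.mem_Icc.1 hl
          have hi1 := haux i h1 h2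
          have hl1 := haux l hl'.1 hl'.2
          calc |ξ i τ - ξ l τ| = |(ξ i τ - ξ 1 τ) - (ξ l τ - ξ 1 τ)| := by ring_nf
            _ ≤ |ξ i τ - ξ 1 τ| + |ξ l τ - ξ 1 τ| := abs_sub _ _
            _ ≤ 2*T := by linarith
      _ = (k:ℝ) * (2*T) := by
          rw [Finset.sum_const, Nat.card_Icc, show k + 1 - 1 = k by omega, nsmul_eq_mul]
  have hxi : |ξ i τ| ≤ 2*T := le_of_mul_le_mul_left (by linarith [hfin]) hkpos
  calc |ξ i τ| ≤ 2*T := hxi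
    _ ≤ 2*((k:ℝ) * (D * exp (-τ))) := by linarith
    _ = 2*(k:ℝ)*D * exp (-τ) := by ring


/-- Global-in-time existence for a bounded, globally Lipschitz autonomous ODE. -/
lemma global_flow {E : Type*} [NormedAddCommGroup E] [NormedSpace ℝ E] [CompleteSpace E]
    (F : E → E) (K : NNReal) (hK : LipschitzWith K F) (Cb : ℝ)
    (hCb : ∀ x, ‖F x‖ ≤ Cb) (x₀ : E) :
    ∃ g : ℝ → E, g 0 = x₀ ∧ ∀ t ∈ Set.Ici (0:ℝ), HasDerivAt g (F (g t)) t := by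
  have hCb0 : 0 ≤ Cb := le_trans (norm_nonneg _) (hCb x₀)
  -- solutions on [0, n] for each n
  have hpl : ∀ n : ℕ, IsPicardLindelof (fun _ x => F x) (tmin := 0) (tmax := n)
      ⟨0, ⟨le_refl 0, Nat.cast_nonneg n⟩⟩ x₀ (Real.toNNReal (Cb * n)) 0 (Real.toNNReal Cb) K := by
    intro n
    have hn0 : (0:ℝ) ≤ (n:ℝ) := Nat.cast_nonneg n
    apply IsPicardLindelof.of_time_independent
    · intro x _
      exact (hCb x).trans (Real.le_coe_toNNReal Cb)
    · exact hK.lipschitzOnWith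
    · rw [Real.coe_toNNReal _ hCb0, Real.coe_toNNReal _ (mul_nonneg hCb0 hn0)]
      simp only [NNReal.coe_zero, sub_zero, zero_sub, neg_zero]
      rw [max_eq_left hn0]
  have hex : ∀ n : ℕ, ∃ α : ℝ → E, α 0 = x₀ ∧
      ∀ t ∈ Icc (0:ℝ) n, HasDerivWithinAt α (F (α t)) (Icc 0 n) t :=
    fun n => (hpl n).exists_eq_forall_mem_Icc_hasDerivWithinAt₀
  choose fs hfs0 hfs using hex
  -- derivative within Ici t for use in uniqueness
  have hderiv_Ici : ∀ n : ℕ, ∀ t ∈ Ico (0:ℝ) (n:ℝ),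
      HasDerivWithinAt (fs n) (F (fs n t)) (Ici t) t := by
    intro n t ht
    refine (hfs n t (Ico_subset_Icc_self ht)).mono_of_mem_nhdsWithin
      (mem_nhdsWithin.2 ⟨Iio (n:ℝ), isOpen_Iio, ht.2, ?_⟩)
    rintro s ⟨hs1, hs2⟩
    exact ⟨le_trans ht.1 hs2, le_of_lt hs1⟩
  have hcont : ∀ n : ℕ, ContinuousOn (fs n) (Icc (0:ℝ) n) :=
    fun n t ht => (hfs n t ht).continuousWithinAt
  -- agreement by uniqueness
  have hagree : ∀ a b : ℕ, a ≤ b → Set.EqOn (fs a) (fs b) (Icc (0:ℝ) (a:ℝ)) := by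
    intro a b hab
    have hab' : (a:ℝ) ≤ (b:ℝ) := by exact_mod_cast hab
    apply ODE_solution_unique (v := fun _ x => F x) (K := K) (fun _ => hK)
      (hcont a)
      (fun t ht => hderiv_Ici a t ht)
      ((hcont b).mono (Icc_subset_Icc_right hab'))
      (fun t ht => hderiv_Ici b t ⟨ht.1, lt_of_lt_of_le ht.2 hab'⟩)
      (by rw [hfs0 a, hfs0 b])
  -- glued global function
  set g : ℝ → E := fun t => if t < 0 then x₀ + t • F x₀ else fs (⌊t⌋₊ + 2) t with hgdef
  have hgagree : ∀ n : ℕ, ∀ s ∈ Icc (0:ℝ) (n:ℝ), g s = fs n s := by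
    intro n s hs
    have hns : ¬ s < 0 := not_lt.2 hs.1
    rw [hgdef]
    simp only [hns, if_false]
    set p := ⌊s⌋₊ + 2 with hp
    have hsp : s ∈ Icc (0:ℝ) (p:ℝ) := by
      refine ⟨hs.1, ?_⟩
      have := Nat.lt_floor_add_one s
      push_cast [hp]
      linarith
    rcases le_total n p with h | h
    · exact (hagree n p h ⟨hs.1, hs.2⟩).symm
    · exact hagree p n h hsp
  have hg0 : g 0 = x₀ := by
    rw [hgagree 2 0 (by norm_num)]
    exact hfs0 2
  refine ⟨g, hg0, ?_⟩
  intro t ht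
  rcases eq_or_lt_of_le (mem_Ici.1 ht) with h0 | hpos
  · -- t = 0 : combine left linear extension and right solution
    subst h0
    have hright : HasDerivWithinAt g (F (g 0)) (Ici 0) 0 := by
      have h2 : HasDerivWithinAt (fs 2) (F (fs 2 0)) (Icc (0:ℝ) 2) 0 := by
        have := hfs 2 0 (by norm_num)
        exact_mod_cast this
      have h2' : HasDerivWithinAt g (F (fs 2 0)) (Icc (0:ℝ) 2) 0 := by
        apply h2.congr
        · intro s hs
          exact hgagree 2 s (by exact_mod_cast hs)
        · exact hgagree 2 0 (by norm_num)
      have hmem : Icc (0:ℝ) 2 ∈ nhdsWithin 0 (Ici (0:ℝ)) := by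
        apply mem_nhdsWithin.2
        refine ⟨Iio (2:ℝ), isOpen_Iio, by norm_num, ?_⟩
        rintro s ⟨hs1, hs2⟩
        exact ⟨hs2, le_of_lt hs1⟩
      have h2'' := h2'.mono_of_mem_nhdsWithin hmem
      have he : F (g 0) = F (fs 2 0) := by rw [hgagree 2 0 (by norm_num)]
      rw [he]
      exact h2''
    have hleft : HasDerivWithinAt g (F (g 0)) (Iic 0) 0 := by
      have hlin : HasDerivAt (fun s : ℝ => x₀ + s • F x₀) (F x₀) 0 := by
        have h1 : HasDerivAt (fun s : ℝ => s • F x₀) ((1:ℝ) • F x₀) 0 :=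
          (hasDerivAt_id (0:ℝ)).smul_const (F x₀)
        have h2 := h1.const_add x₀
        simpa using h2
      have : HasDerivWithinAt (fun s : ℝ => x₀ + s • F x₀) (F x₀) (Iic 0) 0 :=
        hlin.hasDerivWithinAt
      have hcong : HasDerivWithinAt g (F x₀) (Iic 0) 0 := by
        apply this.congr
        · intro s hs
          rcases lt_or_eq_of_le (mem_Iic.1 hs) with h | h
          · rw [hgdef]; simp [h]
          · subst h
            rw [hg0]; simp
        · rw [hg0]; simp
      rwa [hg0]
    have := hleft.union hright
    rw [Iic_union_Ici] at this
    exact hasDerivWithinAt_univ.1 this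
  · -- t > 0 : interior point of Icc 0 n, n := ⌊t⌋₊ + 2
    set n := ⌊t⌋₊ + 2 with hn
    have htn : t < (n:ℝ) := by
      have := Nat.lt_floor_add_one t
      push_cast [hn]
      linarith
    have htmem : t ∈ Icc (0:ℝ) (n:ℝ) := ⟨le_of_lt hpos, le_of_lt htn⟩
    have hne : Icc (0:ℝ) (n:ℝ) ∈ nhds t := Icc_mem_nhds hpos htn
    have hda : HasDerivAt (fs n) (F (fs n t)) t :=
      (hfs n t htmem).hasDerivAt hne
    have hev : g =ᶠ[nhds t] fs n :=
      Filter.eventuallyEq_of_mem hne (fun s hs => hgagree n s hs)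
    have : HasDerivAt g (F (fs n t)) t := hda.congr_of_eventuallyEq hev
    rwa [← hgagree n t htmem] at this


/-! ### clamped nonlinearity -/

noncomputable def cl (M x : ℝ) : ℝ := max (-M) (min M x)

noncomputable def nlc (M x : ℝ) : ℝ := Real.exp (-(cl M x)) - 1

lemma cl_abs_le {M x : ℝ} (hM : 0 ≤ M) : |cl M x| ≤ M := by
  rw [abs_le]
  constructor
  · exact le_max_left _ _
  · apply max_le (by linarith)
    exact min_le_left _ _

lemma cl_eq_self {M x : ℝ} (h : |x| ≤ M) : cl M x = x := by
  rw [abs_le] at h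
  rw [cl, min_eq_right h.2, max_eq_right h.1]

lemma cl_lip (M a b : ℝ) : |cl M a - cl M b| ≤ |a - b| := by
  unfold cl
  rw [max_comm (-M) (min M a), max_comm (-M) (min M b)]
  calc |max (min M a) (-M) - max (min M b) (-M)| ≤ |min M a - min M b| :=
        abs_max_sub_max_le_abs _ _ _
    _ ≤ max |M - M| |a - b| := abs_min_sub_min_le_max _ _ _ _
    _ = |a - b| := by simp

lemma nl_sign (x : ℝ) : nl x * x ≤ 0 := by
  rcases le_total 0 x with h | h
  · have : exp (-x) ≤ 1 := exp_le_one_iff.2 (by linarith)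
    have : nl x ≤ 0 := by rw [nl]; linarith
    exact mul_nonpos_of_nonpos_of_nonneg this h
  · have : 1 ≤ exp (-x) := one_le_exp (by linarith)
    have : 0 ≤ nl x := by rw [nl]; linarith
    exact mul_nonpos_of_nonneg_of_nonpos this h

lemma nlc_sign {M : ℝ} (hM : 0 ≤ M) (x : ℝ) : nlc M x * x ≤ 0 := by
  rcases le_total 0 x with h | h
  · have hcl : 0 ≤ cl M x := by
      apply le_max_of_le_right
      exact le_min hM h
    have : exp (-(cl M x)) ≤ 1 := exp_le_one_iff.2 (by linarith)
    have : nlc M x ≤ 0 := by rw [nlc]; linarith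
    exact mul_nonpos_of_nonpos_of_nonneg this h
  · have hcl : cl M x ≤ 0 := by
      apply max_le (by linarith)
      exact le_trans (min_le_right _ _) h
    have : 1 ≤ exp (-(cl M x)) := one_le_exp (by linarith)
    have : 0 ≤ nlc M x := by rw [nlc]; linarith
    exact mul_nonpos_of_nonneg_of_nonpos this h

lemma exp_two_point {M p q : ℝ} (hp : |p| ≤ M) (hq : |q| ≤ M) :
    |exp (-p) - exp (-q)| ≤ exp M * |p - q| := by
  wlog h : p ≤ q generalizing p q
  · have := this hq hp (by linarith)
    rw [abs_sub_comm (exp (-q)), abs_sub_comm q] at this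
    exact this
  have h1 : exp (-q) ≤ exp (-p) := exp_le_exp.2 (by linarith)
  have h2 : exp (-p) ≤ exp M := exp_le_exp.2 (by cases abs_le.1 hp; linarith)
  have h3 : 1 - exp (-(q - p)) ≤ q - p := one_sub_exp_neg_le _
  have h4 : exp (-p) - exp (-q) = exp (-p) * (1 - exp (-(q - p))) := by
    rw [mul_sub, mul_one, ← Real.exp_add]
    ring_nf
  have h5 : 0 ≤ 1 - exp (-(q-p)) := by
    have : exp (-(q-p)) ≤ 1 := exp_le_one_iff.2 (by linarith)
    linarith
  rw [abs_of_nonneg (by linarith : (0:ℝ) ≤ exp (-p) - exp (-q)),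
    abs_of_nonpos (by linarith : p - q ≤ 0), h4]
  have h6 : exp (-p) * (1 - exp (-(q-p))) ≤ exp M * (q - p) := by
    apply mul_le_mul h2 h3 h5 (le_of_lt (exp_pos M))
  linarith

lemma nlc_lip {M : ℝ} (hM : 0 ≤ M) (a b : ℝ) :
    |nlc M a - nlc M b| ≤ exp M * |a - b| := by
  unfold nlc
  have h1 : |exp (-(cl M a)) - 1 - (exp (-(cl M b)) - 1)| = |exp (-(cl M a)) - exp (-(cl M b))| := by
    congr 1; ring
  rw [h1]
  calc |exp (-(cl M a)) - exp (-(cl M b))| ≤ exp M * |cl M a - cl M b| :=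
        exp_two_point (cl_abs_le hM) (cl_abs_le hM)
    _ ≤ exp M * |a - b| := by
        apply mul_le_mul_of_nonneg_left (cl_lip M a b) (le_of_lt (exp_pos M))

lemma nlc_bdd {M : ℝ} (hM : 0 ≤ M) (x : ℝ) : |nlc M x| ≤ exp M + 1 := by
  unfold nlc
  have h1 : exp (-(cl M x)) ≤ exp M := by
    apply exp_le_exp.2
    have := abs_le.1 (cl_abs_le (x := x) hM)
    linarith [this.1]
  have h2 : 0 < exp (-(cl M x)) := exp_pos _
  rw [abs_le]
  constructor <;> linarith

lemma nlc_eq_nl {M x : ℝ} (h : |x| ≤ M) : nlc M x = nl x := by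
  rw [nlc, nl, cl_eq_self h]

/-! ### the vector field -/

def wrap (k : ℕ) (x : Fin k → ℝ) : ℕ → ℝ := fun j =>
  if h : 1 ≤ j ∧ j ≤ k then x ⟨j-1, by omega⟩ else 0

noncomputable def Fvec (k : ℕ) (M : ℝ) (x : Fin k → ℝ) : Fin k → ℝ := fun i =>
  sig k (i:ℕ) * nlc M (wrap k x ((i:ℕ)+1) - wrap k x (i:ℕ))
    - sig k ((i:ℕ)+1) * nlc M (wrap k x ((i:ℕ)+2) - wrap k x ((i:ℕ)+1))

lemma wrap_dist {k : ℕ} (x y : Fin k → ℝ) (j : ℕ) :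
    |wrap k x j - wrap k y j| ≤ dist x y := by
  unfold wrap
  split
  · next h =>
    have := dist_le_pi_dist x y ⟨j-1, by omega⟩
    rwa [Real.dist_eq] at this
  · simpa using dist_nonneg

lemma Fvec_lip {k : ℕ} {M : ℝ} (hM : 0 ≤ M) :
    LipschitzWith (Real.toNNReal (4*(k:ℝ)^2*exp M)) (Fvec k M) := by
  have hc : (0:ℝ) ≤ 4*(k:ℝ)^2*exp M := by positivity
  apply LipschitzWith.of_dist_le_mul
  intro x y
  rw [Real.coe_toNNReal _ hc]
  rcases isEmpty_or_nonempty (Fin k) with hE | hE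
  · have hxy : (Fvec k M x) = (Fvec k M y) := Subsingleton.elim _ _
    rw [hxy, dist_self]
    positivity
  · apply dist_pi_le_iff (by positivity) |>.2
    intro i
    rw [Real.dist_eq]
    have hbd : ∀ a b : ℕ, a ≤ k →
        |sig k a * nlc M (wrap k x b - wrap k x a) - sig k a * nlc M (wrap k y b - wrap k y a)|
          ≤ (k:ℝ)^2 * exp M * (2 * dist x y) := by
      intro a b ha
      rw [← mul_sub, abs_mul, abs_of_nonneg (sig_nonneg ha)]
      have h1 := nlc_lip hM (wrap k x b - wrap k x a) (wrap k y b - wrap k y a)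
      have h2 : |wrap k x b - wrap k x a - (wrap k y b - wrap k y a)| ≤ 2 * dist x y := by
        have hb := wrap_dist x y b
        have ha' := wrap_dist x y a
        calc |wrap k x b - wrap k x a - (wrap k y b - wrap k y a)|
            = |(wrap k x b - wrap k y b) - (wrap k x a - wrap k y a)| := by ring_nf
          _ ≤ |wrap k x b - wrap k y b| + |wrap k x a - wrap k y a| := abs_sub _ _
          _ ≤ 2 * dist x y := by linarith
      have h3 := sig_le ha
      have h4 : 0 ≤ exp M := le_of_lt (exp_pos M)
      calc sig k a * |nlc M (wrap k x b - wrap k x a) - nlc M (wrap k y b - wrap k y a)|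
          ≤ sig k a * (exp M * (2 * dist x y)) := by
            apply mul_le_mul_of_nonneg_left _ (sig_nonneg ha)
            calc |nlc M (wrap k x b - wrap k x a) - nlc M (wrap k y b - wrap k y a)|
                ≤ exp M * |wrap k x b - wrap k x a - (wrap k y b - wrap k y a)| := h1
              _ ≤ exp M * (2 * dist x y) := by
                  apply mul_le_mul_of_nonneg_left h2 h4
        _ ≤ (k:ℝ)^2 * exp M * (2 * dist x y) := by
            have : 0 ≤ exp M * (2 * dist x y) := by positivity
            nlinarith [dist_nonneg (x := x) (y := y), sq_nonneg (k:ℝ)]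
    have hik : (i:ℕ) ≤ k := le_of_lt i.2
    have hik1 : (i:ℕ)+1 ≤ k ∨ ¬((i:ℕ)+1 ≤ k) := em _
    -- second term : if i+1 > k then sig k (i+1) could be junk... i+1 ≤ k always since i < k
    have hik1' : (i:ℕ)+1 ≤ k := i.2
    unfold Fvec
    have t1 := hbd (i:ℕ) ((i:ℕ)+1) hik
    have t2 := hbd ((i:ℕ)+1) ((i:ℕ)+2) hik1'
    calc |sig k (i:ℕ) * nlc M (wrap k x ((i:ℕ)+1) - wrap k x (i:ℕ))
          - sig k ((i:ℕ)+1) * nlc M (wrap k x ((i:ℕ)+2) - wrap k x ((i:ℕ)+1))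
          - (sig k (i:ℕ) * nlc M (wrap k y ((i:ℕ)+1) - wrap k y (i:ℕ))
          - sig k ((i:ℕ)+1) * nlc M (wrap k y ((i:ℕ)+2) - wrap k y ((i:ℕ)+1)))|
        ≤ |sig k (i:ℕ) * nlc M (wrap k x ((i:ℕ)+1) - wrap k x (i:ℕ))
            - sig k (i:ℕ) * nlc M (wrap k y ((i:ℕ)+1) - wrap k y (i:ℕ))|
          + |sig k ((i:ℕ)+1) * nlc M (wrap k x ((i:ℕ)+2) - wrap k x ((i:ℕ)+1))
            - sig k ((i:ℕ)+1) * nlc M (wrap k y ((i:ℕ)+2) - wrap k y ((i:ℕ)+1))| := by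
          have := abs_sub (sig k (i:ℕ) * nlc M (wrap k x ((i:ℕ)+1) - wrap k x (i:ℕ))
            - sig k (i:ℕ) * nlc M (wrap k y ((i:ℕ)+1) - wrap k y (i:ℕ)))
            (sig k ((i:ℕ)+1) * nlc M (wrap k x ((i:ℕ)+2) - wrap k x ((i:ℕ)+1))
            - sig k ((i:ℕ)+1) * nlc M (wrap k y ((i:ℕ)+2) - wrap k y ((i:ℕ)+1)))
          calc _ = |(sig k (i:ℕ) * nlc M (wrap k x ((i:ℕ)+1) - wrap k x (i:ℕ))
              - sig k (i:ℕ) * nlc M (wrap k y ((i:ℕ)+1) - wrap k y (i:ℕ)))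
              - (sig k ((i:ℕ)+1) * nlc M (wrap k x ((i:ℕ)+2) - wrap k x ((i:ℕ)+1))
              - sig k ((i:ℕ)+1) * nlc M (wrap k y ((i:ℕ)+2) - wrap k y ((i:ℕ)+1)))| := by
                ring_nf
            _ ≤ _ := this
      _ ≤ (k:ℝ)^2 * exp M * (2 * dist x y) + (k:ℝ)^2 * exp M * (2 * dist x y) := by
          linarith
      _ = 4*(k:ℝ)^2*exp M * dist x y := by ring

lemma Fvec_bdd {k : ℕ} {M : ℝ} (hM : 0 ≤ M) (x : Fin k → ℝ) :
    ‖Fvec k M x‖ ≤ 2*(k:ℝ)^2*(exp M + 1) := by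
  apply pi_norm_le_iff_of_nonneg (by positivity) |>.2
  intro i
  rw [Real.norm_eq_abs]
  unfold Fvec
  have h1 : ∀ a b : ℕ, a ≤ k → |sig k a * nlc M (wrap k x b - wrap k x a)|
      ≤ (k:ℝ)^2*(exp M + 1) := by
    intro a b ha
    rw [abs_mul, abs_of_nonneg (sig_nonneg ha)]
    have h2 := nlc_bdd hM (wrap k x b - wrap k x a)
    have h3 := sig_le ha
    have h4 : 0 < exp M + 1 := by positivity
    nlinarith [sig_nonneg ha, abs_nonneg (nlc M (wrap k x b - wrap k x a))]
  have t1 := h1 (i:ℕ) ((i:ℕ)+1) (le_of_lt i.2)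
  have t2 := h1 ((i:ℕ)+1) ((i:ℕ)+2) i.2
  calc |sig k (i:ℕ) * nlc M (wrap k x ((i:ℕ)+1) - wrap k x (i:ℕ))
        - sig k ((i:ℕ)+1) * nlc M (wrap k x ((i:ℕ)+2) - wrap k x ((i:ℕ)+1))|
      ≤ |sig k (i:ℕ) * nlc M (wrap k x ((i:ℕ)+1) - wrap k x (i:ℕ))|
        + |sig k ((i:ℕ)+1) * nlc M (wrap k x ((i:ℕ)+2) - wrap k x ((i:ℕ)+1))| := abs_sub _ _
    _ ≤ 2*(k:ℝ)^2*(exp M + 1) := by linarith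

/-! ### construction of a global solution of (P) -/

lemma exists_global_solution {k m : ℕ} (hk : k = m+2) {C₀ : ℝ} (hC₀ : 0 < C₀)
    (ξ₀ : ℕ → ℝ) (hbound : ∀ i, 1 ≤ i → i ≤ k → |ξ₀ i| ≤ C₀) :
    ∃ ξ : ℕ → ℝ → ℝ, (∀ i, 1 ≤ i → i ≤ k → ξ i 0 = ξ₀ i) ∧ SolvesGen k nl ξ := by
  have hk1 : 1 ≤ k := by omega
  have hkR : (1:ℝ) ≤ (k:ℝ) := by exact_mod_cast hk1
  set M : ℝ := 2*(k:ℝ)*C₀ + 1 with hMdef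
  have hM : 0 ≤ M := by nlinarith
  set x₀ : Fin k → ℝ := fun i => ξ₀ ((i:ℕ)+1) with hx₀def
  obtain ⟨g, hg0, hgd⟩ := global_flow (Fvec k M) _ (Fvec_lip hM) _ (Fvec_bdd hM) x₀
  set ξ : ℕ → ℝ → ℝ := fun j τ => wrap k (g τ) j with hξdef
  have hinit : ∀ i, 1 ≤ i → i ≤ k → ξ i 0 = ξ₀ i := by
    intro i h1 h2
    rw [hξdef]
    simp only [wrap, hg0]
    rw [dif_pos ⟨h1, h2⟩]
    rw [hx₀def]
    simp only []
    congr 1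
    omega
  -- the clamped system is satisfied
  have hsolc : SolvesGen k (nlc M) ξ := by
    intro i h1 h2 τ hτ
    have hgi := (hasDerivAt_pi.1 (hgd τ hτ)) ⟨i-1, by omega⟩
    have hfun : ξ i = fun τ => g τ ⟨i-1, by omega⟩ := by
      funext τ'
      rw [hξdef]
      simp only [wrap]
      rw [dif_pos ⟨h1, h2⟩]
    have hval : Fvec k M (g τ) ⟨i-1, by omega⟩
        = sig k (i-1) * nlc M (ξ i τ - ξ (i-1) τ) - sig k i * nlc M (ξ (i+1) τ - ξ i τ) := by
      have e1 : (i-1) + 1 = i := by omega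
      have e2 : (i-1) + 2 = i + 1 := by omega
      unfold Fvec
      simp only []
      rw [e1, e2]
    rw [← hfun] at hgi
    rw [hval] at hgi
    exact hgi
  -- the solution stays in the region where the clamp is inactive
  have hinit' : ∀ i, 1 ≤ i → i ≤ k → |ξ i 0| ≤ C₀ := fun i h1 h2 => by
    rw [hinit i h1 h2]; exact hbound i h1 h2
  have hsq := sq_bound hk hsolc (nlc_sign hM) hinit'
  have habs : ∀ τ ∈ Set.Ici (0:ℝ), ∀ i, 1 ≤ i → i ≤ k → |ξ i τ| ≤ (k:ℝ)*C₀ := by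
    intro τ hτ i h1 h2
    have h := hsq τ hτ i h1 h2
    have h2' : (ξ i τ)^2 ≤ ((k:ℝ)*C₀)^2 := by nlinarith
    calc |ξ i τ| = Real.sqrt ((ξ i τ)^2) := (Real.sqrt_sq_eq_abs _).symm
      _ ≤ Real.sqrt (((k:ℝ)*C₀)^2) := Real.sqrt_le_sqrt h2'
      _ = (k:ℝ)*C₀ := by rw [Real.sqrt_sq (by positivity)]
  refine ⟨ξ, hinit, ?_⟩
  intro i h1 h2 τ hτ
  have hc := hsolc i h1 h2 τ hτ
  refine hc.congr_deriv ?_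
  have hterm1 : sig k (i-1) * nlc M (ξ i τ - ξ (i-1) τ)
      = sig k (i-1) * nl (ξ i τ - ξ (i-1) τ) := by
    rcases Nat.eq_or_lt_of_le h1 with he | hlt
    · rw [← he]
      simp [sig_zero]
    · have h1' : 1 ≤ i - 1 := by omega
      have h2' : i - 1 ≤ k := by omega
      have ha := habs τ hτ i h1 h2
      have hb := habs τ hτ (i-1) h1' h2'
      have hδ : |ξ i τ - ξ (i-1) τ| ≤ M := by
        rw [hMdef]
        calc |ξ i τ - ξ (i-1) τ| ≤ |ξ i τ| + |ξ (i-1) τ| := abs_sub _ _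
          _ ≤ 2*(k:ℝ)*C₀ + 1 := by linarith
      rw [nlc_eq_nl hδ]
  have hterm2 : sig k i * nlc M (ξ (i+1) τ - ξ i τ)
      = sig k i * nl (ξ (i+1) τ - ξ i τ) := by
    rcases Nat.eq_or_lt_of_le h2 with he | hlt
    · rw [he]
      simp [sig_self]
    · have h1' : 1 ≤ i + 1 := by omega
      have h2' : i + 1 ≤ k := by omega
      have ha := habs τ hτ i h1 h2
      have hb := habs τ hτ (i+1) h1' h2'
      have hδ : |ξ (i+1) τ - ξ i τ| ≤ M := by
        rw [hMdef]
        calc |ξ (i+1) τ - ξ i τ| ≤ |ξ (i+1) τ| + |ξ i τ| := abs_sub _ _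
          _ ≤ 2*(k:ℝ)*C₀ + 1 := by linarith
      rw [nlc_eq_nl hδ]
  rw [hterm1, hterm2]


end Stmt9

/-- there is `C₁ > 0` depending only on `k` and `C₀` such that for any
initial data at `τ = 0` with zero sum and components bounded by `C₀`, the (maximal)
solution of system (P) is defined on all of `[0,∞)` (a global solution with this data
exists) and satisfies `max_{1≤i≤k} |ξᵢ(τ)| ≤ C₁ e^{-τ}` for all `τ ≥ 0`. -/
theorem stmt9 (k : ℕ) (hk : 2 ≤ k) (C₀ : ℝ) (hC₀ : 0 < C₀) :
    ∃ C₁ > 0, ∀ ξ₀ : ℕ → ℝ,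
      (∑ i ∈ Finset.Icc 1 k, ξ₀ i = 0) →
      (∀ i, 1 ≤ i → i ≤ k → |ξ₀ i| ≤ C₀) →
      (∃ ξ : ℕ → ℝ → ℝ, (∀ i, 1 ≤ i → i ≤ k → ξ i 0 = ξ₀ i) ∧
        SolvesP k ξ (Set.Ici 0)) ∧
      (∀ ξ : ℕ → ℝ → ℝ, (∀ i, 1 ≤ i → i ≤ k → ξ i 0 = ξ₀ i) →
        SolvesP k ξ (Set.Ici 0) →
        ∀ τ, 0 ≤ τ → ∀ i, 1 ≤ i → i ≤ k → |ξ i τ| ≤ C₁ * Real.exp (-τ)) := by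
  obtain ⟨m, hm⟩ : ∃ m, k = m + 2 := ⟨k - 2, by omega⟩
  obtain ⟨C₁, hC₁pos, hdec⟩ := Stmt9.decay hm C₀ hC₀
  refine ⟨C₁, hC₁pos, ?_⟩
  intro ξ₀ hsum hbound
  constructor
  · obtain ⟨ξ, hinit, hsol⟩ := Stmt9.exists_global_solution hm hC₀ ξ₀ hbound
    refine ⟨ξ, hinit, ?_⟩
    intro i h1 h2 τ hτ
    have := hsol i h1 h2 τ hτ
    simpa [Stmt9.nl] using this
  · intro ξ hinit hsolP
    have hsum0 : ∑ i ∈ Finset.Icc 1 k, ξ i 0 = 0 := by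
      have he : ∑ i ∈ Finset.Icc 1 k, ξ i 0 = ∑ i ∈ Finset.Icc 1 k, ξ₀ i := by
        apply Finset.sum_congr rfl
        intro i hi
        have hi' := Finset.mem_Icc.1 hi
        exact hinit i hi'.1 hi'.2
      rw [he, hsum]
    have hbound' : ∀ i, 1 ≤ i → i ≤ k → |ξ i 0| ≤ C₀ := fun i a b => by
      rw [hinit i a b]; exact hbound i a b
    have hgen : Stmt9.SolvesGen k Stmt9.nl ξ := by
      intro i h1 h2 τ hτ
      have := hsolP i h1 h2 τ hτ
      simpa [Stmt9.nl] using this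
    intro τ hτ i a b
    exact hdec ξ hsum0 hbound' hgen τ hτ i a b
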